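/- Let SV be the twisted Schrödinger–Virasoro Lie algebra. Suppose every biderivation f of SV has the form f(x,y) = λ[x,y] + χ_Ω(x,y) for some λ ∈ ℂ and finitely supported Ω = (μ_k)_{k∈ℤ}. Then every commutative post-Lie algebra structure · on SV is trivial: x · y = 0 for all x, y ∈ SV. -/

import Mathlib

theorem stmt10
    (V : Type) [LieRing V] [LieAlgebra ℂ V]
    (L Y M : ℤ → V)
    (b : Module.Basis (Fin 3 × ℤ) ℂ V)
    (hbL : ∀ i : ℤ, b ((0 : Fin 3), i) = L i)
    (hbY : ∀ i : ℤ, b ((1 : Fin 3), i) = Y i)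
    (hbM : ∀ i : ℤ, b ((2 : Fin 3), i) = M i)
    (hLL : ∀ m n : ℤ, ⁅L m, L n⁆ = ((m : ℂ) - n) • L (m + n))
    (hLY : ∀ m n : ℤ, ⁅L m, Y n⁆ = ((m : ℂ) / 2 - n) • Y (m + n))
    (hLM : ∀ m n : ℤ, ⁅L m, M n⁆ = (-(n : ℂ)) • M (m + n))
    (hYY : ∀ m n : ℤ, ⁅Y m, Y n⁆ = ((m : ℂ) - n) • M (m + n))
    (hYM : ∀ m n : ℤ, ⁅Y m, M n⁆ = 0)
    (hMM : ∀ m n : ℤ, ⁅M m, M n⁆ = 0)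
    (hclass : ∀ f : V →ₗ[ℂ] V →ₗ[ℂ] V,
      ((∀ x y z : V, f ⁅x, y⁆ z = ⁅x, f y z⁆ + ⁅f x z, y⁆) ∧
       (∀ x y z : V, f x ⁅y, z⁆ = ⁅f x y, z⁆ + ⁅y, f x z⁆)) →
      ∃ (lam : ℂ) (μ : ℤ →₀ ℂ),
        (∀ m n : ℤ, f (L m) (L n) = lam • ⁅L m, L n⁆ + μ.sum fun k c => c • M (m + n + k)) ∧
        (∀ x y : V,
          (x ∈ Submodule.span ℂ (Set.range Y ∪ Set.range M) ∨
           y ∈ Submodule.span ℂ (Set.range Y ∪ Set.range M)) → f x y = lam • ⁅x, y⁆))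
    (mul : V →ₗ[ℂ] V →ₗ[ℂ] V)
    (hcomm : ∀ x y : V, mul x y = mul y x)
    (hpost : ∀ x y z : V, mul ⁅x, y⁆ z = mul x (mul y z) - mul y (mul x z))
    (hder : ∀ x y z : V, mul x ⁅y, z⁆ = ⁅mul x y, z⁆ + ⁅y, mul x z⁆) :
    ∀ x y : V, mul x y = 0 := by
  -- mul is a biderivation
  have hbid1 : ∀ x y z : V, mul ⁅x, y⁆ z = ⁅x, mul y z⁆ + ⁅mul x z, y⁆ := by
    intro x y z
    rw [hcomm, hder z x y, hcomm z x, hcomm z y]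
    rw [add_comm]
  obtain ⟨lam, μ, hLLf, hspan⟩ := hclass mul ⟨hbid1, hder⟩
  have hMmem : ∀ j : ℤ, M j ∈ Submodule.span ℂ (Set.range Y ∪ Set.range M) :=
    fun j => Submodule.subset_span (Or.inr ⟨j, rfl⟩)
  have hYmem : ∀ j : ℤ, Y j ∈ Submodule.span ℂ (Set.range Y ∪ Set.range M) :=
    fun j => Submodule.subset_span (Or.inl ⟨j, rfl⟩)
  -- lam = 0
  have hM1 : M 1 ≠ 0 := by rw [← hbM]; exact b.ne_zero _
  have hlam : lam = 0 := by
    have h1 := hspan (L 0) (M 1) (Or.inr (hMmem 1))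
    have h2 := hspan (M 1) (L 0) (Or.inl (hMmem 1))
    rw [hcomm (L 0) (M 1), h2, ← lie_skew, hLM 0 1] at h1
    norm_num at h1
    have h3 : ((2 : ℂ) * lam) • M 1 = 0 := by
      linear_combination (norm := module) h1
    rcases smul_eq_zero.mp h3 with h | h
    · have h2ne : (2 : ℂ) ≠ 0 := by norm_num
      exact (mul_eq_zero.mp h).resolve_left h2ne
    · exact absurd h hM1
  -- mul x y = 0 when x or y in span (Y ∪ M)
  have hspan0 : ∀ x y : V,
      (x ∈ Submodule.span ℂ (Set.range Y ∪ Set.range M) ∨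
       y ∈ Submodule.span ℂ (Set.range Y ∪ Set.range M)) → mul x y = 0 := by
    intro x y h
    rw [hspan x y h, hlam, zero_smul]
  -- membership of the mu-sums
  have hmemM : ∀ s : ℤ, (μ.sum fun k c => c • M (s + k)) ∈
      Submodule.span ℂ (Set.range Y ∪ Set.range M) := by
    intro s
    refine Submodule.sum_mem _ fun k _ => Submodule.smul_mem _ _ (hMmem (s + k))
  -- mu = 0
  have hLLf' : ∀ m n : ℤ, mul (L m) (L n) = μ.sum fun k c => c • M (m + n + k) := by
    intro m n
    rw [hLLf m n, hlam, zero_smul, zero_add]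
  have hmu : μ = 0 := by
    have hp := hpost (L 1) (L 0) (L (-1))
    rw [hLL 1 0] at hp
    simp only [map_smul, LinearMap.smul_apply] at hp
    rw [hLLf' 0 (-1), hLLf' 1 (-1)] at hp
    rw [hspan0 (L 1) _ (Or.inr (hmemM (0 + -1))), hspan0 (L 0) _ (Or.inr (hmemM (1 + -1)))] at hp
    rw [hLLf' (1 + 0) (-1)] at hp
    norm_num at hp
    -- hp : μ.sum fun k c => c • M k = 0  (roughly)
    have li : LinearIndependent ℂ (fun k : ℤ => M k) := by
      have : LinearIndependent ℂ (fun k : ℤ => b ((2 : Fin 3), k)) :=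
        b.linearIndependent.comp (fun k : ℤ => ((2 : Fin 3), k))
          (fun a b h => by simpa using h)
      simpa [hbM] using this
    apply linearIndependent_iff.mp li
    rw [Finsupp.linearCombination_apply]
    convert hp using 2 with k c
  have hLL0 : ∀ m n : ℤ, mul (L m) (L n) = 0 := by
    intro m n
    rw [hLLf' m n, hmu]
    simp
  -- mul (L m) = 0
  have hLx : ∀ m : ℤ, mul (L m) = (0 : V →ₗ[ℂ] V) := by
    intro m
    apply b.ext
    rintro ⟨c, j⟩
    fin_cases c
    · show mul (L m) (b ((0 : Fin 3), j)) = (0 : V →ₗ[ℂ] V) (b ((0 : Fin 3), j))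
      rw [hbL]; simpa using hLL0 m j
    · show mul (L m) (b ((1 : Fin 3), j)) = (0 : V →ₗ[ℂ] V) (b ((1 : Fin 3), j))
      rw [hbY]; simpa using hspan0 _ _ (Or.inr (hYmem j))
    · show mul (L m) (b ((2 : Fin 3), j)) = (0 : V →ₗ[ℂ] V) (b ((2 : Fin 3), j))
      rw [hbM]; simpa using hspan0 _ _ (Or.inr (hMmem j))
  intro x y
  have hx : mul x = (0 : V →ₗ[ℂ] V) := by
    apply b.ext
    rintro ⟨c, j⟩
    fin_cases c
    · show mul x (b ((0 : Fin 3), j)) = (0 : V →ₗ[ℂ] V) (b ((0 : Fin 3), j))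
      rw [hbL, hcomm, hLx j]; simp
    · show mul x (b ((1 : Fin 3), j)) = (0 : V →ₗ[ℂ] V) (b ((1 : Fin 3), j))
      rw [hbY]; simpa using hspan0 _ _ (Or.inr (hYmem j))
    · show mul x (b ((2 : Fin 3), j)) = (0 : V →ₗ[ℂ] V) (b ((2 : Fin 3), j))
      rw [hbM]; simpa using hspan0 _ _ (Or.inr (hMmem j))
  rw [hx]
  rfl
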